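/- Let δ = b₁ b₂ ⋯ b_k be a strictly increasing word whose letters all have the same parity, and let δ′ = b_k ⋯ b₂ b₁ be its reverse. Then δ and δ′ are symplectic Coxeter-Knuth equivalent. -/
import Mathlib


/-- Coxeter-Knuth equivalence: the congruence on words of positive integers
generated by `cab ∼ acb`, `bca ∼ bac`, `aba ∼ bab` for `a < b < c`. -/
inductive CK : List ℕ → List ℕ → Prop
  | refl (w : List ℕ) : CK w w
  | symm {v w : List ℕ} : CK v w → CK w v
  | trans {u v w : List ℕ} : CK u v → CK v w → CK u w
  | cab_acb (x y : List ℕ) {a b c : ℕ} (ha : 0 < a) (hab : a < b) (hbc : b < c) :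
      CK (x ++ [c, a, b] ++ y) (x ++ [a, c, b] ++ y)
  | bca_bac (x y : List ℕ) {a b c : ℕ} (ha : 0 < a) (hab : a < b) (hbc : b < c) :
      CK (x ++ [b, c, a] ++ y) (x ++ [b, a, c] ++ y)
  | aba_bab (x y : List ℕ) {a b : ℕ} (ha : 0 < a) (hab : a < b) :
      CK (x ++ [a, b, a] ++ y) (x ++ [b, a, b] ++ y)

/-- Symplectic Coxeter-Knuth equivalence: the strongest equivalence relation
containing Coxeter-Knuth equivalence together with the moves swapping the
first two letters when they have equal parity, and replacing an initial
`a(a−1)` (for `a ≥ 2`) by `a(a+1)`. -/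
inductive SpCK : List ℕ → List ℕ → Prop
  | ck {v w : List ℕ} : CK v w → SpCK v w
  | swap_init (w : List ℕ) {a b : ℕ} (ha : 0 < a) (hb : 0 < b) (h : a % 2 = b % 2) :
      SpCK (a :: b :: w) (b :: a :: w)
  | bump_init (w : List ℕ) {a : ℕ} (h : 2 ≤ a) :
      SpCK (a :: (a - 1) :: w) (a :: (a + 1) :: w)
  | symm {v w : List ℕ} : SpCK v w → SpCK w v
  | trans {u v w : List ℕ} : SpCK u v → SpCK v w → SpCK u w

/-- A word on the positive integers. -/
def PosWord (w : List ℕ) : Prop := ∀ x ∈ w, 0 < x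

theorem CK.append_left {u v : List ℕ} (h : CK u v) (p : List ℕ) :
    CK (p ++ u) (p ++ v) := by
  induction h with
  | refl w => exact CK.refl _
  | symm _ ih => exact ih.symm
  | trans _ _ ih1 ih2 => exact ih1.trans ih2
  | cab_acb x y ha hab hbc =>
      simpa [List.append_assoc] using CK.cab_acb (p ++ x) y ha hab hbc
  | bca_bac x y ha hab hbc =>
      simpa [List.append_assoc] using CK.bca_bac (p ++ x) y ha hab hbc
  | aba_bab x y ha hab =>
      simpa [List.append_assoc] using CK.aba_bab (p ++ x) y ha hab

theorem ck_slide (a : ℕ) (ha : 0 < a) :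
    ∀ (L : List ℕ) (b : ℕ) (r : List ℕ), a < b → List.Chain' (· < ·) (b :: L) →
      CK (b :: a :: (L ++ r)) (b :: (L ++ a :: r))
  | [], b, r, _, _ => CK.refl _
  | c :: L', b, r, hab, hch => by
      have hbc : b < c := (List.isChain_cons_cons.mp hch).1
      have hch' : List.Chain' (· < ·) (c :: L') := (List.isChain_cons_cons.mp hch).2
      have h1 : CK (b :: a :: c :: (L' ++ r)) (b :: c :: a :: (L' ++ r)) :=
        (CK.bca_bac [] (L' ++ r) ha hab hbc).symm
      have h2 := (ck_slide a ha L' c r (lt_trans hab hbc) hch').append_left [b]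
      exact h1.trans (by simpa using h2)

theorem spck_aux : ∀ (s r : List ℕ), PosWord s → List.Chain' (· < ·) s →
    (∀ x ∈ s, ∀ y ∈ s, x % 2 = y % 2) → SpCK (s ++ r) (s.reverse ++ r)
  | [], r, _, _, _ => SpCK.ck (CK.refl _)
  | [x], r, _, _, _ => SpCK.ck (CK.refl _)
  | x :: y :: L, r, hpos, hch, hpar => by
      have hx : 0 < x := hpos x (by simp)
      have hy : 0 < y := hpos y (by simp)
      have hxy : x < y := (List.isChain_cons_cons.mp hch).1
      have hch' : List.Chain' (· < ·) (y :: L) := (List.isChain_cons_cons.mp hch).2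
      have hsw : SpCK (x :: y :: (L ++ r)) (y :: x :: (L ++ r)) :=
        SpCK.swap_init (L ++ r) hx hy (hpar x (by simp) y (by simp))
      have hsl : CK (y :: x :: (L ++ r)) (y :: (L ++ x :: r)) :=
        ck_slide x hx L y r hxy hch'
      have hrec : SpCK ((y :: L) ++ (x :: r)) ((y :: L).reverse ++ (x :: r)) :=
        spck_aux (y :: L) (x :: r)
          (fun z hz => hpos z (List.mem_cons_of_mem x hz))
          hch'
          (fun z hz w hw => hpar z (List.mem_cons_of_mem x hz) w (List.mem_cons_of_mem x hw))
      have : SpCK ((x :: y :: L) ++ r) ((y :: L).reverse ++ (x :: r)) :=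
        (hsw.trans (SpCK.ck hsl)).trans hrec
      simpa [List.append_assoc] using this

/-- a strictly increasing word with all letters of the same
parity is symplectic Coxeter-Knuth equivalent to its reverse. -/
theorem spck_reverse (δ : List ℕ) (hpos : PosWord δ)
    (hinc : List.Chain' (· < ·) δ)
    (hpar : ∀ x ∈ δ, ∀ y ∈ δ, x % 2 = y % 2) :
    SpCK δ δ.reverse := by
  simpa using spck_aux δ [] hpos hinc hpar
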